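/- For integers q ≥ 3 and k ≥ 4, with y = (1 + 3/q)·[k choose 1]_q·[2k−2 choose k−2]_q and v = [2k choose k]_q, the quantity (q^{k(k−1)} − q^{k^2}(1 + q^{−k})·y/v) / (q^{k(k−1)}(1 − q^{−2k+3})) is at most 1 − 1/q − 4/q^2. -/

import Mathlib

/-- The Gaussian binomial coefficient `[n choose k]_q`. -/
def gaussBinom (q n k : ℕ) : ℚ :=
  ∏ i ∈ Finset.range k, ((q : ℚ) ^ (n - i) - 1) / ((q : ℚ) ^ (i + 1) - 1)

lemma gauss_step (q n : ℕ) (hq : 3 ≤ q) :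
    gaussBinom q (2*n+4) (n+2) * (((q:ℚ)^(n+1) - 1) * ((q:ℚ)^(n+2) - 1)) =
    gaussBinom q (2*n+2) n * (((q:ℚ)^(2*n+4) - 1) * ((q:ℚ)^(2*n+3) - 1)) := by
  have hQ3 : (3:ℚ) ≤ (q:ℚ) := by exact_mod_cast hq
  have hQ1 : (1:ℚ) < (q:ℚ) := by linarith
  have hpow : ∀ j : ℕ, (0:ℚ) < (q:ℚ) ^ (j+1) - 1 := by
    intro j
    have := one_lt_pow₀ hQ1 (n := j+1) (by omega)
    linarith
  unfold gaussBinom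
  rw [Finset.prod_div_distrib, Finset.prod_div_distrib]
  have hnum : ∏ i ∈ Finset.range (n+2), ((q:ℚ)^(2*n+4-i) - 1)
      = (∏ i ∈ Finset.range n, ((q:ℚ)^(2*n+2-i) - 1)) *
          (((q:ℚ)^(2*n+3)-1) * ((q:ℚ)^(2*n+4)-1)) := by
    rw [Finset.prod_range_succ', Finset.prod_range_succ']
    rw [Finset.prod_congr rfl (fun i _ => by rw [show 2*n+4-(i+1+1) = 2*n+2-i from by omega])]
    rw [show 2*n+4-(0+1) = 2*n+3 from by omega, show 2*n+4-0 = 2*n+4 from by omega]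
    ring
  have hden : ∏ i ∈ Finset.range (n+2), ((q:ℚ)^(i+1) - 1)
      = (∏ i ∈ Finset.range n, ((q:ℚ)^(i+1)-1)) *
          (((q:ℚ)^(n+1)-1) * ((q:ℚ)^(n+2)-1)) := by
    rw [Finset.prod_range_succ, Finset.prod_range_succ]
    ring
  rw [hnum, hden]
  have hd0 : (∏ i ∈ Finset.range n, ((q:ℚ)^(i+1)-1)) ≠ 0 :=
    Finset.prod_ne_zero_iff.mpr (fun i _ => (hpow i).ne')
  have hs1 : ((q:ℚ)^(n+1)-1) ≠ 0 := (hpow n).ne'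
  have hs2 : ((q:ℚ)^(n+2)-1) ≠ 0 := by
    have h := hpow (n+1); rw [show n+1+1 = n+2 from by omega] at h; exact h.ne'
  field_simp

lemma dold_nonneg (Q x : ℚ) (hq : 3 ≤ Q) (hx : Q ≤ x) :
    0 ≤ x^2*Q^4*(Q+3)*(x*Q^3-1)*(x*Q^2-1) - ((Q+4)*x^2*Q^3 + Q^2-Q-4)*(Q-1)*(x^2*Q^5-1) := by
  have hx3 : (3:ℚ) ≤ x := le_trans hq hx
  have hq0 : (0:ℚ) ≤ Q := by linarith
  have hx0 : (0:ℚ) ≤ x := by linarith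
  nlinarith [mul_nonneg (mul_nonneg (pow_nonneg hx0 3) (pow_nonneg hq0 8)) (by linarith : (0:ℚ) ≤ x - 3),
    mul_nonneg (mul_nonneg (pow_nonneg hx0 3) (pow_nonneg hq0 7)) (by linarith : (0:ℚ) ≤ Q - 3),
    mul_nonneg (mul_nonneg (pow_nonneg hx0 3) (pow_nonneg hq0 6)) (by linarith : (0:ℚ) ≤ Q - 3),
    mul_nonneg (mul_nonneg (pow_nonneg hx0 2) (pow_nonneg hq0 8)) (by linarith : (0:ℚ) ≤ x - 3),
    mul_nonneg (mul_nonneg (pow_nonneg hx0 2) (pow_nonneg hq0 5)) (by linarith : (0:ℚ) ≤ Q - 3),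
    mul_nonneg (mul_nonneg (pow_nonneg hx0 2) (pow_nonneg hq0 3)) (by linarith : (0:ℚ) ≤ Q - 3),
    mul_nonneg (pow_nonneg hq0 2) (by linarith : (0:ℚ) ≤ Q - 3),
    mul_nonneg hq0 (by linarith : (0:ℚ) ≤ Q - 3)]

set_option maxHeartbeats 1000000 in
lemma core (Q x w P : ℚ) (hQ3 : 3 ≤ Q) (hxQ : Q ≤ x) (hw : 0 < w) (hP : 0 < P) :
    (P -
        P * (x * Q ^ 3) * (1 + 1 / (x * Q ^ 3)) *
            ((1 + 3 / Q) * ((x * Q ^ 3 - 1) / (Q - 1)) * w) /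
          (w * ((x ^ 2 * Q ^ 6 - 1) * (x ^ 2 * Q ^ 5 - 1)) / ((x * Q ^ 2 - 1) * (x * Q ^ 3 - 1)))) /
      (P * (1 - Q ^ 3 / (x ^ 2 * Q ^ 6))) ≤
    1 - 1 / Q - 4 / Q ^ 2 := by
  have hx3 : (3:ℚ) ≤ x := le_trans hQ3 hxQ
  have hQ0 : (0:ℚ) < Q := by linarith
  have hx0 : (0:ℚ) < x := by linarith
  have hQ27 : (27:ℚ) ≤ Q^3 := by
    calc (27:ℚ) = 3^3 := by norm_num
    _ ≤ Q^3 := by gcongr <;> norm_num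
  have hQ9 : (9:ℚ) ≤ Q^2 := by
    calc (9:ℚ) = 3^2 := by norm_num
    _ ≤ Q^2 := by gcongr <;> norm_num
  have hx9 : (9:ℚ) ≤ x^2 := by
    calc (9:ℚ) = 3^2 := by norm_num
    _ ≤ x^2 := by gcongr <;> norm_num
  have hQ1 : (0:ℚ) < Q - 1 := by linarith
  have h1 : (0:ℚ) < x*Q^3 - 1 := by nlinarith
  have h2 : (0:ℚ) < x*Q^2 - 1 := by nlinarith
  have h5 : (0:ℚ) < x^2*Q^5 - 1 := by nlinarith
  have h6 : (0:ℚ) < x^2*Q^6 - 1 := by nlinarith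
  have h7 : (0:ℚ) < x^2*Q^3 - 1 := by nlinarith
  have hB : Q^3/(x^2*Q^6) = 1/(x^2*Q^3) := by
    rw [div_eq_div_iff (by positivity) (by positivity)]; ring
  have hBlt : (0:ℚ) < 1 - Q^3/(x^2*Q^6) := by
    rw [hB]
    have : 1/(x^2*Q^3) < 1 := by
      rw [div_lt_one (by positivity)]; nlinarith
    linarith
  have hD : (0:ℚ) < P * (1 - Q^3/(x^2*Q^6)) := mul_pos hP hBlt
  rw [div_le_iff₀ hD]
  have hdpos : (0:ℚ) < Q^5 * x^2 * (Q-1) * ((x^2*Q^6-1) * (x^2*Q^5-1)) := by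
    have := mul_pos h6 h5
    positivity
  refine le_of_mul_le_mul_right ?_ hdpos
  have hwne : w ≠ 0 := hw.ne'
  have e1 : (P -
        P * (x * Q ^ 3) * (1 + 1 / (x * Q ^ 3)) *
            ((1 + 3 / Q) * ((x * Q ^ 3 - 1) / (Q - 1)) * w) /
          (w * ((x ^ 2 * Q ^ 6 - 1) * (x ^ 2 * Q ^ 5 - 1)) / ((x * Q ^ 2 - 1) * (x * Q ^ 3 - 1)))) *
      (Q^5 * x^2 * (Q-1) * ((x^2*Q^6-1) * (x^2*Q^5-1)))
      = P * ((Q^5 * x^2 * (Q-1) * ((x^2*Q^6-1) * (x^2*Q^5-1)))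
          - Q^4*x^2*(Q+3)*(x*Q^3+1)*(x*Q^3-1)^2*(x*Q^2-1)) := by
    field_simp
  have e2 : (1 - 1 / Q - 4 / Q ^ 2) * (P * (1 - Q ^ 3 / (x ^ 2 * Q ^ 6))) *
      (Q^5 * x^2 * (Q-1) * ((x^2*Q^6-1) * (x^2*Q^5-1)))
      = P * ((Q^2-Q-4)*(x^2*Q^3-1)*(Q-1)*((x^2*Q^6-1)*(x^2*Q^5-1))) := by
    field_simp
  rw [e1, e2]
  have hdo := dold_nonneg Q x hQ3 hxQ
  nlinarith [mul_nonneg (mul_nonneg hP.le hdo) h6.le]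

/-- The key estimate in Lemma 3.7: for integers `q ≥ 3`, `k ≥ 4`, with
`y = (1 + 3/q)·[k choose 1]_q·[2k-2 choose k-2]_q` and `v = [2k choose k]_q`,
`(q^{k(k-1)} - q^{k²}(1 + q^{-k})·y/v) / (q^{k(k-1)}(1 - q^{-2k+3})) ≤ 1 - 1/q - 4/q²`. -/
theorem lemma37_key_estimate (q k : ℕ) (hq : 3 ≤ q) (hk : 4 ≤ k)
    (y v : ℚ)
    (hy : y = (1 + 3 / (q : ℚ)) * gaussBinom q k 1 * gaussBinom q (2 * k - 2) (k - 2))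
    (hv : v = gaussBinom q (2 * k) k) :
    ((q : ℚ) ^ (k * (k - 1)) - (q : ℚ) ^ (k * k) * (1 + 1 / (q : ℚ) ^ k) * y / v) /
        ((q : ℚ) ^ (k * (k - 1)) * (1 - (q : ℚ) ^ 3 / (q : ℚ) ^ (2 * k))) ≤
      1 - 1 / (q : ℚ) - 4 / (q : ℚ) ^ 2 := by
  obtain ⟨m, rfl⟩ : ∃ m, k = m + 4 := ⟨k - 4, by omega⟩
  have hQ3 : (3:ℚ) ≤ (q:ℚ) := by exact_mod_cast hq
  have hQ1 : (1:ℚ) < (q:ℚ) := by linarith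
  have hQ0 : (0:ℚ) < (q:ℚ) := by linarith
  set Q : ℚ := (q:ℚ) with hQdef
  set x : ℚ := Q ^ (m+1) with hxdef
  have hx0 : (0:ℚ) < x := pow_pos hQ0 _
  have hxQ : Q ≤ x := by
    calc Q = Q^1 := (pow_one Q).symm
    _ ≤ Q^(m+1) := pow_le_pow_right₀ (le_of_lt hQ1) (by omega)
  have hk4 : Q ^ (m+4) = x * Q^3 := by rw [hxdef]; ring
  have hk3 : Q ^ (m+3) = x * Q^2 := by rw [hxdef]; ring
  have h2k : Q ^ (2*(m+4)) = x^2 * Q^6 := by rw [hxdef]; ring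
  have h2k1 : Q ^ (2*(m+4)-1) = x^2 * Q^5 := by
    rw [show 2*(m+4)-1 = 2*m+7 from by omega, hxdef]; ring
  -- w
  set w : ℚ := gaussBinom q (2*m+6) (m+2) with hwdef
  have hpow : ∀ j : ℕ, (0:ℚ) < Q ^ (j+1) - 1 := by
    intro j
    have := one_lt_pow₀ hQ1 (n := j+1) (by omega)
    linarith
  have hw0 : (0:ℚ) < w := by
    rw [hwdef]
    apply Finset.prod_pos
    intro i hi
    have hi' : i < m + 2 := Finset.mem_range.mp hi
    apply div_pos
    · obtain ⟨j, hj⟩ : ∃ j, 2*m+6-i = j+1 := ⟨2*m+6-i-1, by omega⟩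
      rw [hj]; exact hpow j
    · exact hpow i
  -- gauss values
  have hg1 : gaussBinom q (m+4) 1 = (x * Q^3 - 1)/(Q - 1) := by
    rw [← hk4]
    simp [gaussBinom]
    rfl
  have hy' : y = (1 + 3/Q) * ((x * Q^3 - 1)/(Q - 1)) * w := by
    rw [hy, show 2*(m+4)-2 = 2*m+6 from by omega, show m+4-2 = m+2 from by omega, hg1, hwdef]
  have hstep := gauss_step q (m+2) hq
  rw [show 2*(m+2)+4 = 2*(m+4) from by omega, show m+2+2 = m+4 from by omega,
      show m+2+1 = m+3 from by omega, show 2*(m+2)+3 = 2*(m+4)-1 from by omega,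
      show 2*(m+2)+2 = 2*m+6 from by omega] at hstep
  rw [hk4, hk3, h2k, h2k1, ← hwdef] at hstep
  -- hstep : gaussBinom q (2*(m+4)) (m+4) * ((x*Q^2-1)*(x*Q^3-1)) = w * ((x^2*Q^6-1)*(x^2*Q^5-1))
  have hQ27 : (27:ℚ) ≤ Q^3 := by nlinarith [sq_nonneg Q]
  have hQ9 : (9:ℚ) ≤ Q^2 := by nlinarith
  have hd1 : (0:ℚ) < x*Q^3 - 1 := by nlinarith
  have hd2 : (0:ℚ) < x*Q^2 - 1 := by nlinarith
  have hveq : v = w * ((x^2*Q^6-1)*(x^2*Q^5-1)) / ((x*Q^2-1)*(x*Q^3-1)) := by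
    rw [eq_div_iff (mul_pos hd2 hd1).ne']
    rw [hv]
    exact hstep
  have hkk : Q ^ ((m+4)*(m+4)) = Q ^ ((m+4)*((m+4)-1)) * (x * Q^3) := by
    rw [← hk4, ← pow_add, show (m+4)*((m+4)-1) + (m+4) = (m+4)*(m+4) from by
      rw [show (m+4)-1 = m+3 from by omega]; ring]
  rw [hy', hveq, hkk, hk4, h2k]
  exact core Q x w (Q ^ ((m+4)*((m+4)-1))) hQ3 hxQ hw0 (pow_pos hQ0 _)
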